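/- Let V''(c) be the (2n+1)×(2n+1) matrix with rows: for 1 ≤ i ≤ n, V''_{i,j} = xᵢ^{j-1}; for 1 ≤ i ≤ n, V''_{n+i,j} = yᵢ^{j-1}; and V''_{2n+1,j} = z^{j-1} - c·z^{2n+1-j}. Then the coefficient of c⁰ in det V''(c) equals ∏_{1≤i<j≤n}(xⱼ-xᵢ)(yⱼ-yᵢ) · ∏_{i,j=1}^n (yⱼ-xᵢ) · ∏_{i=1}^n (z-xᵢ)(z-yᵢ), and the coefficient of c¹ equals -z^{2n} · ∏_{1≤i<j≤n}(xⱼ-xᵢ)(yⱼ-yᵢ) · ∏_{i,j=1}^n (yⱼ-xᵢ) · ∏_{i=1}^n (z⁻¹-xᵢ)(z⁻¹-yᵢ). -/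

import Mathlib

set_option linter.unusedSectionVars false
set_option maxHeartbeats 1000000

open Finset

section Aux

variable {K : Type*} [Field K]

/-- triangle product over ℕ -/
def TnAux (m : ℕ) (u : ℕ → K) : K := ∏ i ∈ range m, ∏ j ∈ Ico (i+1) m, (u j - u i)

lemma TnAux_succ (m : ℕ) (u : ℕ → K) :
    TnAux (m+1) u = TnAux m u * ∏ i ∈ range m, (u m - u i) := by
  unfold TnAux
  rw [Finset.prod_range_succ, Finset.Ico_self, Finset.prod_empty, mul_one,
    ← Finset.prod_mul_distrib]
  apply Finset.prod_congr rfl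
  intro i hi
  rw [Finset.prod_Ico_succ_top (Nat.succ_le_of_lt (Finset.mem_range.mp hi))]

lemma TnAux_add (a b : ℕ) (u : ℕ → K) :
    TnAux (a+b) u = TnAux a u * TnAux b (fun k => u (a+k)) *
      ∏ i ∈ range a, ∏ j ∈ range b, (u (a+j) - u i) := by
  induction b with
  | zero => simp [TnAux]
  | succ b ih =>
    rw [show a + (b+1) = (a+b)+1 from rfl, TnAux_succ, ih, TnAux_succ,
      Finset.prod_range_add]
    simp only [Finset.prod_range_succ]
    rw [Finset.prod_mul_distrib]
    ring

lemma finIoiToIco {m : ℕ} (i : Fin m) (g : ℕ → K) :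
    ∏ j ∈ Finset.Ioi i, g (j : ℕ) = ∏ j ∈ Finset.Ico ((i:ℕ)+1) m, g j := by
  have := (Finset.prod_map (Finset.Ioi i) Fin.valEmbedding g).symm
  simp only [Fin.valEmbedding_apply] at this
  rw [this, Fin.map_valEmbedding_Ioi]
  apply Finset.prod_congr _ (fun _ _ => rfl)
  ext k
  have hm : (i:ℕ) < m := i.isLt
  simp only [Finset.mem_Ioc, Finset.mem_Ioo, Finset.mem_Ico]
  omega

lemma finTriangleToTn {m : ℕ} (v : Fin m → K) (u : ℕ → K)
    (h : ∀ i : Fin m, v i = u i) :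
    (∏ i : Fin m, ∏ j ∈ Finset.Ioi i, (v j - v i)) = TnAux m u := by
  unfold TnAux
  rw [← Fin.prod_univ_eq_prod_range (fun k => ∏ j ∈ Finset.Ico (k+1) m, (u j - u k))]
  apply Finset.prod_congr rfl
  intro i _
  rw [← finIoiToIco i (fun k => u k - u i)]
  exact Finset.prod_congr rfl fun j _ => by rw [h, h]

lemma pairProd {n : ℕ} (f : Fin n → Fin n → K) :
    ∏ p ∈ Finset.univ.filter (fun p : Fin n × Fin n => p.1 < p.2), f p.1 p.2 =
    ∏ i : Fin n, ∏ j ∈ Finset.Ioi i, f i j := by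
  rw [Finset.prod_filter, Fintype.prod_prod_type]
  apply Finset.prod_congr rfl
  intro i _
  rw [← Finset.prod_filter, Finset.filter_lt_eq_Ioi]

def combA (n : ℕ) (x y : Fin n → K) (w : K) : ℕ → K := fun k =>
  if h : k < n then x ⟨k, h⟩ else if h2 : k < 2*n then y ⟨k - n, by omega⟩ else w

lemma combA_x {n : ℕ} (x y : Fin n → K) (w : K) (i : Fin n) : combA n x y w i = x i := by
  simp [combA, i.isLt, Fin.eta]

lemma combA_y {n : ℕ} (x y : Fin n → K) (w : K) (i : Fin n) : combA n x y w (n + i) = y i := by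
  have h1 : ¬ (n + (i:ℕ) < n) := by omega
  have h2 : n + (i:ℕ) < 2*n := by have := i.isLt; omega
  simp only [combA, dif_neg h1, dif_pos h2]
  congr 1
  exact Fin.ext (by simp)

lemma combA_w {n : ℕ} (x y : Fin n → K) (w : K) : combA n x y w (2*n) = w := by
  unfold combA
  rw [dif_neg (by omega), dif_neg (by omega)]

lemma mainProd (n : ℕ) (x y : Fin n → K) (w : K) :
    TnAux (2*n+1) (combA n x y w) =
      (∏ p ∈ Finset.univ.filter (fun p : Fin n × Fin n => p.1 < p.2),
          (x p.2 - x p.1) * (y p.2 - y p.1)) *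
        (∏ i, ∏ j, (y j - x i)) * ∏ i, (w - x i) * (w - y i) := by
  set u := combA n x y w with hu
  rw [TnAux_succ, show 2*n = n+n by ring, TnAux_add, Finset.prod_range_add]
  rw [Finset.prod_mul_distrib, pairProd (fun a b => x b - x a),
    pairProd (fun a b => y b - y a), Finset.prod_mul_distrib]
  rw [finTriangleToTn x u (fun i => (combA_x x y w i).symm)]
  rw [finTriangleToTn y (fun k => u (n+k)) (fun i => (combA_y x y w i).symm)]
  have hcross : (∏ i ∈ Finset.range n, ∏ j ∈ Finset.range n, (u (n+j) - u i)) =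
      ∏ i, ∏ j, (y j - x i) := by
    rw [← Fin.prod_univ_eq_prod_range (fun i => ∏ j ∈ Finset.range n, (u (n+j) - u i))]
    apply Finset.prod_congr rfl; intro i _
    rw [← Fin.prod_univ_eq_prod_range (fun j => (u (n+j) - u i))]
    exact Finset.prod_congr rfl fun j _ => by rw [hu, combA_x, combA_y]
  have hlast1 : (∏ i ∈ Finset.range n, (u (n+n) - u i)) = ∏ i, (w - x i) := by
    rw [← Fin.prod_univ_eq_prod_range (fun i => (u (n+n) - u i))]
    exact Finset.prod_congr rfl fun i _ => by
      rw [hu, combA_x, show n+n = 2*n by ring, combA_w]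
  have hlast2 : (∏ i ∈ Finset.range n, (u (n+n) - u (n+i))) = ∏ i, (w - y i) := by
    rw [← Fin.prod_univ_eq_prod_range (fun i => (u (n+n) - u (n+i)))]
    exact Finset.prod_congr rfl fun i _ => by
      rw [hu, combA_y, show n+n = 2*n by ring, combA_w]
  rw [hcross, hlast1, hlast2]

open Matrix in
lemma detVdmComb (n : ℕ) (x y : Fin n → K) (w : K) :
    Matrix.det (vandermonde (fun i : Fin (2*n+1) => combA n x y w i)) =
      (∏ p ∈ Finset.univ.filter (fun p : Fin n × Fin n => p.1 < p.2),
          (x p.2 - x p.1) * (y p.2 - y p.1)) *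
        (∏ i, ∏ j, (y j - x i)) * ∏ i, (w - x i) * (w - y i) := by
  rw [Matrix.det_vandermonde, ← mainProd n x y w]
  exact finTriangleToTn _ _ (fun i => rfl)

end Aux

open Polynomial in
/-- The matrix `V''(c)` with `c` an indeterminate (`Polynomial.X`). -/
noncomputable def VppMat (n : ℕ) {K : Type*} [Field K] (x y : Fin n → K) (z : K) :
    Matrix (Fin (2*n+1)) (Fin (2*n+1)) (Polynomial K) :=
  Matrix.of fun i j =>
    if hi : (i : ℕ) < n then C (x ⟨i, hi⟩ ^ (j : ℕ))
    else if hi2 : (i : ℕ) < 2*n then C (y ⟨(i : ℕ) - n, by omega⟩ ^ (j : ℕ))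
    else C (z ^ (j : ℕ)) - C (z ^ (2*n - (j : ℕ))) * X

section Det

variable {K : Type*} [Field K]

open Polynomial Matrix in
lemma detVpp (n : ℕ) (x y : Fin n → K) (z : K) (hz : z ≠ 0) :
    Matrix.det (VppMat n x y z) =
      C (Matrix.det (vandermonde (fun i : Fin (2*n+1) => combA n x y z i))) +
      C (-(z^(2*n) *
        Matrix.det (vandermonde (fun i : Fin (2*n+1) => combA n x y z⁻¹ i)))) * X := by
  set L : Fin (2*n+1) := ⟨2*n, by omega⟩ with hL
  have hLval : (L : ℕ) = 2*n := rfl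
  set Mz : Matrix (Fin (2*n+1)) (Fin (2*n+1)) (Polynomial K) :=
    (vandermonde (fun i : Fin (2*n+1) => combA n x y z i)).map C with hMz
  have hne : ∀ i : Fin (2*n+1), i ≠ L → (i : ℕ) < 2*n := by
    intro i hi
    have h1 : (i : ℕ) ≠ 2*n := fun h => hi (Fin.ext h)
    have := i.isLt
    omega
  have h1 : VppMat n x y z = Matrix.updateRow Mz L
      ((fun j : Fin (2*n+1) => C (z ^ (j:ℕ))) +
        ((-X : Polynomial K) • (fun j : Fin (2*n+1) => C (z ^ (2*n - (j:ℕ)))))) := by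
    apply Matrix.ext
    intro i j
    rw [Matrix.updateRow_apply]
    by_cases hiL : i = L
    · subst hiL
      rw [if_pos rfl]
      simp only [VppMat, Matrix.of_apply, hLval]
      rw [dif_neg (by omega), dif_neg (by omega)]
      simp only [Pi.add_apply, Pi.smul_apply, smul_eq_mul]
      ring
    · rw [if_neg hiL]
      have hi2 := hne i hiL
      simp only [VppMat, Matrix.of_apply, hMz, Matrix.map_apply, vandermonde_apply, combA]
      by_cases hi : (i : ℕ) < n
      · rw [dif_pos hi, dif_pos hi]
      · rw [dif_neg hi, dif_neg hi, dif_pos hi2, dif_pos hi2]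
  rw [h1, Matrix.det_updateRow_add, Matrix.det_updateRow_smul]
  have hrow : (fun j : Fin (2*n+1) => C (z ^ (j:ℕ))) = Mz L := by
    funext j
    simp only [hMz, Matrix.map_apply, vandermonde_apply, combA, hLval]
    rw [dif_neg (by omega), dif_neg (by omega)]
  rw [hrow, Matrix.updateRow_eq_self]
  have h3 : (fun j : Fin (2*n+1) => C (z ^ (2*n - (j:ℕ)))) =
      C (z^(2*n)) • (fun j : Fin (2*n+1) => C (z⁻¹ ^ (j:ℕ))) := by
    funext j
    have hj : (j:ℕ) ≤ 2*n := by have := j.isLt; omega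
    simp only [Pi.smul_apply, smul_eq_mul, ← C_mul]
    congr 1
    rw [inv_pow, eq_comm, mul_inv_eq_iff_eq_mul₀ (pow_ne_zero _ hz), ← pow_add]
    congr 1
    omega
  rw [h3, Matrix.det_updateRow_smul]
  have h4 : Matrix.updateRow Mz L (fun j : Fin (2*n+1) => C (z⁻¹ ^ (j:ℕ))) =
      (vandermonde (fun i : Fin (2*n+1) => combA n x y z⁻¹ i)).map C := by
    apply Matrix.ext
    intro i j
    rw [Matrix.updateRow_apply]
    by_cases hiL : i = L
    · subst hiL
      rw [if_pos rfl]
      simp only [Matrix.map_apply, vandermonde_apply, hLval, combA_w]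
    · rw [if_neg hiL]
      have hi2 := hne i hiL
      simp only [hMz, Matrix.map_apply, vandermonde_apply, combA]
      by_cases hi : (i : ℕ) < n
      · rw [dif_pos hi, dif_pos hi]
      · rw [dif_neg hi, dif_neg hi, dif_pos hi2, dif_pos hi2]
  rw [h4]
  have hmap : ∀ (M : Matrix (Fin (2*n+1)) (Fin (2*n+1)) K),
      (M.map (C : K →+* Polynomial K)).det = C M.det := fun M => by
    rw [← RingHom.mapMatrix_apply, ← RingHom.map_det]
  rw [hMz, hmap, hmap, ← C_mul, C_neg]
  ring

end Det

open Polynomial in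
/-- the coefficients of `c⁰` and `c¹` in `det V''(c)`. -/
theorem stmt5 (n : ℕ) {K : Type*} [Field K] (x y : Fin n → K) (z : K) (hz : z ≠ 0) :
    (Matrix.det (VppMat n x y z)).coeff 0 =
      (∏ p ∈ Finset.univ.filter (fun p : Fin n × Fin n => p.1 < p.2),
          (x p.2 - x p.1) * (y p.2 - y p.1)) *
        (∏ i, ∏ j, (y j - x i)) * ∏ i, (z - x i) * (z - y i)
    ∧
    (Matrix.det (VppMat n x y z)).coeff 1 =
      -(z ^ (2*n)) *
        ((∏ p ∈ Finset.univ.filter (fun p : Fin n × Fin n => p.1 < p.2),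
            (x p.2 - x p.1) * (y p.2 - y p.1)) *
          (∏ i, ∏ j, (y j - x i)) * ∏ i, (z⁻¹ - x i) * (z⁻¹ - y i)) := by
  rw [detVpp n x y z hz]
  constructor
  · simp only [coeff_add, coeff_C_mul, coeff_C, coeff_X_zero, if_pos rfl, mul_zero, add_zero]
    exact detVdmComb n x y z
  · simp only [coeff_add, coeff_C_mul, coeff_C, coeff_X_one, mul_one, if_neg (one_ne_zero),
      zero_add]
    rw [detVdmComb n x y z⁻¹]
    ring
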